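/- arXiv:0707.1660 — 2 statements merged into one kernel-verified Lean document; each statement's English description precedes it below -/
import Mathlib

section
/- For all nonnegative integers n and all integers k, one has C_μ(2n, k-1) + C_μ(2n, k) = C_μ(2n+1, k) (μ-deformed Pascal identity for even upper index). -/
open Finset

/-- The μ-deformed factorial function γ_μ. -/
noncomputable def gammaMu (μ : ℝ) : ℕ → ℝ
  | 0 => 1
  | n + 1 => ((n + 1 : ℝ) + 2 * μ * (if Odd (n + 1) then 1 else 0)) * gammaMu μ n

/-- The μ-deformed binomial coefficient C_μ(n,k), zero outside 0 ≤ k ≤ n. -/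
noncomputable def binomMu (μ : ℝ) (n : ℕ) (k : ℤ) : ℝ :=
  if 0 ≤ k ∧ k ≤ (n : ℤ) then gammaMu μ n / (gammaMu μ (n - k.toNat) * gammaMu μ k.toNat) else 0

/-- The n-th μ-deformed binomial polynomial p_{n,μ}(x,y). -/
noncomputable def pMu (μ : ℝ) (n : ℕ) (x y : ℂ) : ℂ :=
  ∑ k ∈ Finset.range (n + 1), (binomMu μ n k : ℂ) * x ^ k * y ^ (n - k)

/-- The μ-deformed exponential function. -/
noncomputable def expMu (μ : ℝ) (z : ℂ) : ℂ :=
  ∑' n : ℕ, z ^ n / (gammaMu μ n : ℂ)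

/-- The Bessel function of the first kind of order ν, for positive real argument. -/
noncomputable def besselJ (ν x : ℝ) : ℝ :=
  ∑' m : ℕ, ((-1) ^ m / (Nat.factorial m * Real.Gamma (ν + m + 1))) * (x / 2) ^ ((2 * m : ℝ) + ν)

lemma gammaMu_succ (μ : ℝ) (n : ℕ) :
    gammaMu μ (n+1) = ((n + 1 : ℝ) + 2 * μ * (if Odd (n + 1) then 1 else 0)) * gammaMu μ n := rfl

lemma fac_pos (μ : ℝ) (hμ : -(1/2:ℝ) < μ) (n : ℕ) :
    (0:ℝ) < (n + 1 : ℝ) + 2 * μ * (if Odd (n + 1) then 1 else 0) := by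
  have hn : (0:ℝ) ≤ (n:ℝ) := Nat.cast_nonneg n
  split_ifs <;> nlinarith

lemma gammaMu_pos (μ : ℝ) (hμ : -(1/2:ℝ) < μ) : ∀ n, 0 < gammaMu μ n := by
  intro n
  induction n with
  | zero => norm_num [gammaMu]
  | succ n ih => rw [gammaMu_succ]; exact mul_pos (fac_pos μ hμ n) ih

lemma key (μ : ℝ) (hμ : -(1/2:ℝ) < μ) (n j r : ℕ) (h : 2*n = j + 1 + r) :
    gammaMu μ (2*n) / (gammaMu μ (r+1) * gammaMu μ j)
    + gammaMu μ (2*n) / (gammaMu μ r * gammaMu μ (j+1))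
    = gammaMu μ (2*n+1) / (gammaMu μ (r+1) * gammaMu μ (j+1)) := by
  have hodd : Odd (2*n+1) := odd_two_mul_add_one n
  have e3 : gammaMu μ (2*n+1) = ((2*n+1 : ℝ) + 2*μ) * gammaMu μ (2*n) := by
    rw [gammaMu_succ]; push_cast; simp [hodd]
  set s : ℝ := if Odd (j+1) then 1 else 0 with hs
  set t : ℝ := if Odd (r+1) then 1 else 0 with ht
  have hst : s + t = 1 := by
    rcases Nat.even_or_odd (j+1) with hj | hj
    · have hr : Odd (r+1) := by
        rw [Nat.odd_iff]; rw [Nat.even_iff] at hj; omega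
      simp [hs, ht, hr, Nat.not_odd_iff_even.mpr hj]
    · have hr : ¬ Odd (r+1) := by
        rw [Nat.odd_iff] at hj ⊢; omega
      simp [hs, ht, hj, hr]
  have ej : gammaMu μ (j+1) = ((j + 1 : ℝ) + 2*μ*s) * gammaMu μ j := gammaMu_succ μ j
  have er : gammaMu μ (r+1) = ((r + 1 : ℝ) + 2*μ*t) * gammaMu μ r := gammaMu_succ μ r
  have hA : ((j + 1 : ℝ) + 2*μ*s) ≠ 0 := ne_of_gt (fac_pos μ hμ j)
  have hB : ((r + 1 : ℝ) + 2*μ*t) ≠ 0 := ne_of_gt (fac_pos μ hμ r)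
  have hGj : gammaMu μ j ≠ 0 := ne_of_gt (gammaMu_pos μ hμ j)
  have hGr : gammaMu μ r ≠ 0 := ne_of_gt (gammaMu_pos μ hμ r)
  have hn : (2*n : ℝ) = (j:ℝ) + 1 + r := by exact_mod_cast congrArg (Nat.cast : ℕ → ℝ) h
  have ht2 : t = 1 - s := by linarith
  have e3' : gammaMu μ (2*n+1) = ((j:ℝ) + 1 + (r:ℝ) + 1 + 2*μ) * gammaMu μ (2*n) := by
    rw [e3]; linear_combination gammaMu μ (2*n) * hn
  have er' : gammaMu μ (r+1) = ((r + 1 : ℝ) + 2*μ*(1-s)) * gammaMu μ r := by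
    rw [er, ht2]
  have hB' : ((r + 1 : ℝ) + 2*μ*(1-s)) ≠ 0 := by rw [← ht2]; exact hB
  rw [e3', ej, er']
  field_simp
  ring

theorem binomMu_pascal_even (μ : ℝ) (hμ : -(1/2 : ℝ) < μ) (n : ℕ) (k : ℤ) :
    binomMu μ (2 * n) (k - 1) + binomMu μ (2 * n) k = binomMu μ (2 * n + 1) k := by
  rcases lt_or_ge k 0 with hk | hk
  · rw [binomMu, binomMu, binomMu, if_neg (by omega), if_neg (by omega), if_neg (by omega)]
    ring
  rcases lt_or_ge (2*n+1 : ℤ) k with hk2 | hk2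
  · rw [binomMu, binomMu, binomMu, if_neg (by push_cast; omega), if_neg (by push_cast; omega),
      if_neg (by push_cast; omega)]
    ring
  lift k to ℕ using hk with m
  have hG := gammaMu_pos μ hμ
  rcases Nat.eq_zero_or_pos m with rfl | hm1
  · rw [binomMu, binomMu, binomMu, if_neg (by omega), if_pos ⟨by omega, by omega⟩,
      if_pos ⟨by omega, by omega⟩]
    have t0 : ((0:ℕ):ℤ).toNat = 0 := rfl
    rw [t0, Nat.sub_zero, Nat.sub_zero, show gammaMu μ 0 = 1 from rfl, mul_one, mul_one,
      div_self (ne_of_gt (hG (2*n))), div_self (ne_of_gt (hG (2*n+1))), zero_add]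
  rcases Nat.lt_or_ge (2*n) m with hm2 | hm2
  · -- m = 2n+1
    have hm : m = 2*n+1 := by omega
    subst hm
    rw [binomMu, binomMu, binomMu, if_pos ⟨by omega, by push_cast; omega⟩,
      if_neg (by push_cast; omega), if_pos ⟨by omega, by push_cast; omega⟩]
    have h1 : ((2*n+1 : ℕ) : ℤ) - 1 = ((2*n : ℕ) : ℤ) := by push_cast; ring
    rw [h1]
    have t1 : ((2*n:ℕ):ℤ).toNat = 2*n := by omega
    have t2 : ((2*n+1:ℕ):ℤ).toNat = 2*n+1 := by omega
    rw [t1, t2, Nat.sub_self, Nat.sub_self, show gammaMu μ 0 = 1 from rfl, one_mul, one_mul,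
      div_self (ne_of_gt (hG (2*n))), div_self (ne_of_gt (hG (2*n+1))), add_zero]
  · -- 1 ≤ m ≤ 2n
    obtain ⟨j, rfl⟩ : ∃ j, m = j + 1 := ⟨m - 1, by omega⟩
    set r := 2*n - (j+1) with hr
    have hsum : 2*n = j + 1 + r := by omega
    rw [binomMu, binomMu, binomMu, if_pos ⟨by omega, by push_cast; omega⟩,
      if_pos ⟨by omega, by push_cast; omega⟩, if_pos ⟨by omega, by push_cast; omega⟩]
    have t1 : (((j+1 : ℕ) : ℤ) - 1).toNat = j := by omega
    have t2 : ((j+1 : ℕ) : ℤ).toNat = j + 1 := by omega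
    rw [t1, t2]
    have u1 : 2*n - j = r + 1 := by omega
    have u2 : 2*n - (j+1) = r := by omega
    have u3 : 2*n + 1 - (j+1) = r + 1 := by omega
    rw [u1, u2, u3]
    exact key μ hμ n j r hsum
end

section
/- For every integer n ≥ 1, the alternating sum of the μ-deformed binomial coefficients satisfies p_{2n,μ}(1,-1) = Σ_{k=0}^{2n} (-1)^k C_μ(2n,k) = (2^{2n} μ/(n+μ)) · Π_{k=1}^{n} (k+μ)/(k+2μ). -/
open Finset

noncomputable def asc (x : ℝ) (n : ℕ) : ℝ := ∏ i ∈ Finset.range n, (x + i)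

lemma asc_zero (x : ℝ) : asc x 0 = 1 := by simp [asc]

lemma asc_succ (x : ℝ) (n : ℕ) : asc x (n + 1) = asc x n * (x + n) := by
  simp [asc, Finset.prod_range_succ]

lemma asc_add (x : ℝ) (m k : ℕ) : asc x (m + k) = asc x m * asc (x + m) k := by
  rw [asc, Finset.prod_range_add]
  congr 1
  apply Finset.prod_congr rfl
  intro i _
  push_cast; ring

lemma asc_pos {x : ℝ} (hx : 0 < x) (n : ℕ) : 0 < asc x n := by
  apply Finset.prod_pos
  intro i _
  positivity

lemma asc_reflect (x : ℝ) (n : ℕ) : asc x n = (-1) ^ n * asc (1 - x - n) n := by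
  have hrhs : (-1 : ℝ) ^ n * asc (1 - x - n) n = ∏ i ∈ range n, (-(1 - x - n + i)) := by
    have : ∀ i ∈ range n, (-(1 - x - n + (i:ℝ))) = (-1) * (1 - x - n + i) := by
      intro i _; ring
    rw [Finset.prod_congr rfl this, Finset.prod_mul_distrib, Finset.prod_const,
      Finset.card_range, asc]
  rw [hrhs, asc, ← Finset.prod_range_reflect]
  apply Finset.prod_congr rfl
  intro i hi
  have hi' : i < n := Finset.mem_range.mp hi
  have hc : ((n - 1 - i : ℕ) : ℝ) = (n : ℝ) - 1 - i := by
    have h1 : i ≤ n - 1 := by omega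
    push_cast [Nat.cast_sub h1, Nat.cast_sub (by omega : 1 ≤ n)]
    ring
  rw [hc]; ring

lemma vander (x y : ℝ) (n : ℕ) :
    ∑ j ∈ range (n + 1), (n.choose j : ℝ) * asc x j * asc y (n - j) = asc (x + y) n := by
  induction n with
  | zero => simp [asc]
  | succ n ih =>
    rw [Finset.sum_range_succ']
    have step1 : ∀ j ∈ range (n + 1),
        ((n+1).choose (j+1) : ℝ) * asc x (j+1) * asc y (n + 1 - (j+1))
          = (n.choose j : ℝ) * asc x (j+1) * asc y (n - j)
            + (n.choose (j+1) : ℝ) * asc x (j+1) * asc y (n - j) := by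
      intro j _
      have h : n + 1 - (j + 1) = n - j := by omega
      rw [h, Nat.choose_succ_succ]
      push_cast; ring
    rw [Finset.sum_congr rfl step1, Finset.sum_add_distrib]
    have h0 : ∀ k : ℕ, n + 1 - (k + 1) = n - k := fun k => by omega
    have htail : (∑ j ∈ range (n+1), (n.choose (j+1) : ℝ) * asc x (j+1) * asc y (n - j))
        + ((n+1).choose 0 : ℝ) * asc x 0 * asc y (n + 1 - 0)
        = ∑ j ∈ range (n+1), (n.choose j : ℝ) * asc x j * asc y (n + 1 - j) := by
      have hs := Finset.sum_range_succ' (fun j => (n.choose j : ℝ) * asc x j * asc y (n + 1 - j)) (n+1)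
      rw [Finset.sum_range_succ] at hs
      simp only [h0, Nat.choose_succ_self, Nat.cast_zero, zero_mul, mul_zero, add_zero,
        Nat.choose_zero_right, Nat.cast_one, Nat.sub_zero] at hs ⊢
      linarith [hs]
    rw [add_assoc, htail]
    have key : ∀ j ∈ range (n+1),
        (n.choose j : ℝ) * asc x (j+1) * asc y (n - j)
          + (n.choose j : ℝ) * asc x j * asc y (n + 1 - j)
        = ((n.choose j : ℝ) * asc x j * asc y (n - j)) * (x + y + n) := by
      intro j hj
      have hj' : j ≤ n := by have := Finset.mem_range.mp hj; omega
      have h1 : n + 1 - j = (n - j) + 1 := by omega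
      rw [h1, asc_succ, asc_succ]
      have hc : ((n - j : ℕ) : ℝ) = (n : ℝ) - j := by push_cast [Nat.cast_sub hj']; ring
      rw [hc]
      ring
    rw [← Finset.sum_add_distrib, Finset.sum_congr rfl key, ← Finset.sum_mul, ih, asc_succ]
    try push_cast
    try ring

lemma gammaMu_parity (μ : ℝ) (m : ℕ) :
    gammaMu μ (2*m) = 4 ^ m * m.factorial * asc (μ + 1/2) m ∧
    gammaMu μ (2*m+1) = 2 * 4 ^ m * m.factorial * asc (μ + 1/2) (m+1) := by
  induction m with
  | zero =>
    constructor
    · simp [gammaMu, asc]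
    · show gammaMu μ 1 = _
      rw [show gammaMu μ 1 = gammaMu μ (0 + 1) from rfl]
      simp [gammaMu, asc]
      ring
  | succ m ih =>
    obtain ⟨ihe, iho⟩ := ih
    have heven : gammaMu μ (2*(m+1)) = ((2*m + 2 : ℝ)) * gammaMu μ (2*m+1) := by
      rw [show 2*(m+1) = (2*m+1)+1 by omega]
      rw [gammaMu]
      rw [if_neg (by simp [Nat.odd_iff]; omega)]
      push_cast; ring
    have he2 : gammaMu μ (2*(m+1)) = 4 ^ (m+1) * (m+1).factorial * asc (μ + 1/2) (m+1) := by
      rw [heven, iho, asc_succ]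
      rw [Nat.factorial_succ]
      push_cast; ring
    refine ⟨he2, ?_⟩
    have hodd2 : gammaMu μ (2*(m+1)+1) = ((2*(m+1) + 1 : ℝ) + 2*μ) * gammaMu μ (2*(m+1)) := by
      rw [show 2*(m+1)+1 = (2*(m+1))+1 from rfl]
      rw [gammaMu]
      rw [if_pos ⟨m+1, by omega⟩]
      push_cast; ring
    rw [hodd2, he2, asc_succ, asc_succ, asc_succ]
    push_cast; ring

lemma sum_split (f : ℕ → ℝ) (n : ℕ) :
    ∑ k ∈ range (2*n+1), f k = ∑ j ∈ range (n+1), f (2*j) + ∑ j ∈ range n, f (2*j+1) := by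
  induction n with
  | zero => simp
  | succ n ih =>
    rw [show 2*(n+1)+1 = (2*n+1)+1+1 by omega, Finset.sum_range_succ, Finset.sum_range_succ,
      ih, Finset.sum_range_succ (fun j => f (2*j)) (n+1), Finset.sum_range_succ (fun j => f (2*j+1)) n,
      show 2*(n+1) = 2*n+1+1 by omega]
    ring

lemma dup (μ : ℝ) (n : ℕ) :
    asc (2*μ+1) (2*n) = 4 ^ n * asc (μ+1) n * asc (μ+1/2) n := by
  induction n with
  | zero => simp [asc]
  | succ n ih =>
    rw [show 2*(n+1) = (2*n+1)+1 by omega, asc_succ, show 2*n+1 = (2*n)+1 from rfl, asc_succ,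
      ih, asc_succ, asc_succ]
    push_cast; ring

lemma asc_ratio_even (a : ℝ) (ha : 0 < a) (m j : ℕ) (hj : j ≤ m + 1) :
    asc a (m+1) / (asc a (m + 1 - j) * asc a j)
      = (-1)^(m+1) * asc (-a - m) j * asc (-a - m) (m + 1 - j) / asc a (m+1) := by
  have h1 := asc_add a j (m + 1 - j)
  rw [show j + (m + 1 - j) = m + 1 by omega] at h1
  have h2 := asc_add a (m + 1 - j) j
  rw [show (m + 1 - j) + j = m + 1 by omega] at h2
  have h3 : asc (a + j) (m + 1 - j) = (-1)^(m + 1 - j) * asc (-a - m) (m + 1 - j) := by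
    have harg : (1 : ℝ) - (a + j) - ((m + 1 - j : ℕ) : ℝ) = -a - m := by
      push_cast [Nat.cast_sub hj]; ring
    rw [asc_reflect (a + j) (m + 1 - j), harg]
  have h4 : asc (a + ((m + 1 - j : ℕ) : ℝ)) j = (-1)^j * asc (-a - m) j := by
    have harg : (1 : ℝ) - (a + ((m + 1 - j : ℕ) : ℝ)) - (j : ℝ) = -a - m := by
      push_cast [Nat.cast_sub hj]; ring
    rw [asc_reflect (a + ((m + 1 - j : ℕ) : ℝ)) j, harg]
  have hs : ((-1 : ℝ))^(m + 1 - j) * (-1)^j = (-1)^(m+1) := by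
    rw [← pow_add]; congr 1; omega
  have hA : (0:ℝ) < asc a (m+1) := asc_pos ha _
  have hB : (0:ℝ) < asc a (m + 1 - j) := asc_pos ha _
  have hC : (0:ℝ) < asc a j := asc_pos ha _
  have key : asc a (m+1) * asc a (m+1)
      = (asc a (m + 1 - j) * asc a j) * ((-1)^(m+1) * asc (-a - m) j * asc (-a - m) (m + 1 - j)) := by
    nth_rewrite 1 [h1]
    nth_rewrite 1 [h2]
    rw [h3, h4, ← hs]; ring
  rw [div_eq_div_iff (by positivity) (by positivity)]
  linear_combination key

lemma asc_ratio_odd (a : ℝ) (ha : 0 < a) (m j : ℕ) (hj : j ≤ m) :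
    asc a (m+1) / (asc a (m - j + 1) * asc a (j + 1))
      = (-1)^m * asc (-a - m) j * asc (-a - m) (m - j) / asc a (m+1) := by
  have h1 := asc_add a (j+1) (m - j)
  rw [show (j+1) + (m - j) = m + 1 by omega] at h1
  have h2 := asc_add a (m - j + 1) j
  rw [show (m - j + 1) + j = m + 1 by omega] at h2
  have h3 : asc (a + (((j:ℕ)+1 : ℕ) : ℝ)) (m - j) = (-1)^(m - j) * asc (-a - m) (m - j) := by
    have harg : (1 : ℝ) - (a + (((j:ℕ)+1 : ℕ) : ℝ)) - ((m - j : ℕ) : ℝ) = -a - m := by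
      push_cast [Nat.cast_sub hj]; ring
    rw [asc_reflect, harg]
  have h4 : asc (a + ((m - j + 1 : ℕ) : ℝ)) j = (-1)^j * asc (-a - m) j := by
    have harg : (1 : ℝ) - (a + ((m - j + 1 : ℕ) : ℝ)) - (j : ℝ) = -a - m := by
      push_cast [Nat.cast_sub hj]; ring
    rw [asc_reflect, harg]
  have hs : ((-1 : ℝ))^(m - j) * (-1)^j = (-1)^m := by
    rw [← pow_add]; congr 1; omega
  have hA : (0:ℝ) < asc a (m+1) := asc_pos ha _
  have hB : (0:ℝ) < asc a (m - j + 1) := asc_pos ha _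
  have hC : (0:ℝ) < asc a (j+1) := asc_pos ha _
  have key : asc a (m+1) * asc a (m+1)
      = (asc a (m - j + 1) * asc a (j + 1)) * ((-1)^m * asc (-a - m) j * asc (-a - m) (m - j)) := by
    nth_rewrite 1 [h1]
    nth_rewrite 1 [h2]
    rw [h3, h4, ← hs]; ring
  rw [div_eq_div_iff (by positivity) (by positivity)]
  linear_combination key

lemma binomMu_nat (μ : ℝ) (N k : ℕ) (h : k ≤ N) :
    binomMu μ N (k : ℤ) = gammaMu μ N / (gammaMu μ (N - k) * gammaMu μ k) := by
  rw [binomMu, if_pos ⟨Int.ofNat_nonneg k, Int.ofNat_le.mpr h⟩]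
  simp


lemma even_term (μ : ℝ) (hμ : -(1/2 : ℝ) < μ) (m j : ℕ) (hj : j ≤ m + 1) :
    binomMu μ (2*(m+1)) ((2*j : ℕ) : ℤ)
      = (((m+1).choose j : ℝ) * asc (-(μ+1/2) - m) j * asc (-(μ+1/2) - m) (m+1-j))
        * ((-1)^(m+1) / asc (μ+1/2) (m+1)) := by
  have ha : (0:ℝ) < μ + 1/2 := by linarith
  rw [binomMu_nat μ _ _ (by omega),
    show 2*(m+1) - 2*j = 2*((m+1)-j) by omega,
    (gammaMu_parity μ (m+1)).1, (gammaMu_parity μ ((m+1)-j)).1, (gammaMu_parity μ j).1]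
  have hratio := asc_ratio_even (μ+1/2) ha m j hj
  have hApos : (0:ℝ) < asc (μ+1/2) (m+1) := asc_pos ha _
  have hBpos : (0:ℝ) < asc (μ+1/2) (m+1-j) := asc_pos ha _
  have hCpos : (0:ℝ) < asc (μ+1/2) j := asc_pos ha _
  rw [div_eq_div_iff (by positivity) (by positivity)] at hratio
  have hch : ((m+1).choose j : ℝ) * (j.factorial : ℝ) * ((m+1-j).factorial : ℝ)
      = ((m+1).factorial : ℝ) := by
    exact_mod_cast congrArg (Nat.cast : ℕ → ℝ) (Nat.choose_mul_factorial_mul_factorial hj)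
  have h4 : (4:ℝ)^(m+1-j) * 4^j = 4^(m+1) := by rw [← pow_add]; congr 1; omega
  have hf1 : (0:ℝ) < (j.factorial : ℝ) := by positivity
  have hf2 : (0:ℝ) < ((m+1-j).factorial : ℝ) := by positivity
  rw [div_eq_iff (by positivity), ← hch, ← h4]
  set A := asc (μ+1/2) (m+1) with hA
  set B := asc (μ+1/2) (m+1-j) with hB
  set C := asc (μ+1/2) j with hC
  set P := asc (-(μ+1/2) - (m:ℝ)) j with hPd
  set Q := asc (-(μ+1/2) - (m:ℝ)) (m+1-j) with hQd
  field_simp [hApos.ne']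
  linear_combination ((4:ℝ)^(m+1-j) * 4^j * (((m+1).choose j : ℝ)) * (j.factorial : ℝ)
    * ((m+1-j).factorial : ℝ) + (((m+1).choose j : ℝ)) * (1 - (j.factorial : ℝ)
    * ((m+1-j).factorial : ℝ) * (4:ℝ)^(m+1-j) * 4^j)) * hratio

lemma odd_term (μ : ℝ) (hμ : -(1/2 : ℝ) < μ) (m j : ℕ) (hj : j ≤ m) :
    binomMu μ (2*(m+1)) ((2*j+1 : ℕ) : ℤ)
      = (((m:ℝ)+1) * (m.choose j : ℝ) * asc (-(μ+1/2) - m) j * asc (-(μ+1/2) - m) (m-j))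
        * ((-1)^m / asc (μ+1/2) (m+1)) := by
  have ha : (0:ℝ) < μ + 1/2 := by linarith
  rw [binomMu_nat μ _ _ (by omega),
    show 2*(m+1) - (2*j+1) = 2*(m-j)+1 by omega,
    (gammaMu_parity μ (m+1)).1, (gammaMu_parity μ (m-j)).2, (gammaMu_parity μ j).2]
  have hratio := asc_ratio_odd (μ+1/2) ha m j hj
  have hApos : (0:ℝ) < asc (μ+1/2) (m+1) := asc_pos ha _
  have hBpos : (0:ℝ) < asc (μ+1/2) (m-j+1) := asc_pos ha _
  have hCpos : (0:ℝ) < asc (μ+1/2) (j+1) := asc_pos ha _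
  rw [div_eq_div_iff (by positivity) (by positivity)] at hratio
  have hch : (m.choose j : ℝ) * (j.factorial : ℝ) * ((m-j).factorial : ℝ)
      = (m.factorial : ℝ) := by
    exact_mod_cast congrArg (Nat.cast : ℕ → ℝ) (Nat.choose_mul_factorial_mul_factorial hj)
  have hfac : ((m+1).factorial : ℝ) = ((m:ℝ)+1) * (m.factorial : ℝ) := by
    rw [Nat.factorial_succ]; push_cast; ring
  have h4 : (4:ℝ)^(m-j) * 4^j = 4^m := by rw [← pow_add]; congr 1; omega
  have h4' : (4:ℝ)^(m+1) = 4 * 4^m := by rw [pow_succ]; ring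
  have hf1 : (0:ℝ) < (j.factorial : ℝ) := by positivity
  have hf2 : (0:ℝ) < ((m-j).factorial : ℝ) := by positivity
  rw [div_eq_iff (by positivity), hfac, ← hch, h4', ← h4]
  set A := asc (μ+1/2) (m+1) with hA
  set B := asc (μ+1/2) (m-j+1) with hB
  set C := asc (μ+1/2) (j+1) with hC
  set P := asc (-(μ+1/2) - (m:ℝ)) j with hPd
  set Q := asc (-(μ+1/2) - (m:ℝ)) (m-j) with hQd
  field_simp [hApos.ne']
  linear_combination ((4:ℝ) * 4^(m-j) * 4^j * ((m:ℝ)+1) * ((m.choose j : ℝ)) * (j.factorial : ℝ)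
    * ((m-j).factorial : ℝ) + 4 * ((m.choose j : ℝ)) * (1 - ((m:ℝ)+1) * (j.factorial : ℝ)
    * ((m-j).factorial : ℝ) * (4:ℝ)^(m-j) * 4^j)) * hratio


lemma real_main (μ : ℝ) (hμ : -(1/2 : ℝ) < μ) (m : ℕ) :
    ∑ k ∈ range (2*(m+1)+1), (-1:ℝ)^k * binomMu μ (2*(m+1)) (k : ℤ)
      = 2*μ * asc (2*μ+m+2) m / asc (μ+1/2) (m+1) := by
  have ha : (0:ℝ) < μ + 1/2 := by linarith
  have hApos : (0:ℝ) < asc (μ+1/2) (m+1) := asc_pos ha _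
  rw [sum_split (fun k => (-1:ℝ)^k * binomMu μ (2*(m+1)) (k : ℤ)) (m+1)]
  have heven : ∑ j ∈ range (m+1+1), (-1:ℝ)^(2*j) * binomMu μ (2*(m+1)) ((2*j : ℕ) : ℤ)
      = asc ((-(μ+1/2) - m) + (-(μ+1/2) - m)) (m+1) * ((-1)^(m+1) / asc (μ+1/2) (m+1)) := by
    rw [← vander (-(μ+1/2) - m) (-(μ+1/2) - m) (m+1), Finset.sum_mul]
    apply Finset.sum_congr rfl
    intro j hj
    have hj' : j ≤ m + 1 := by have := Finset.mem_range.mp hj; omega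
    have hsgn : (-1:ℝ)^(2*j) = 1 := by rw [pow_mul]; norm_num
    rw [hsgn, one_mul, even_term μ hμ m j hj']
  have hodd : ∑ j ∈ range (m+1), (-1:ℝ)^(2*j+1) * binomMu μ (2*(m+1)) ((2*j+1 : ℕ) : ℤ)
      = asc ((-(μ+1/2) - m) + (-(μ+1/2) - m)) m
          * (-(((m:ℝ)+1) * ((-1)^m / asc (μ+1/2) (m+1)))) := by
    rw [← vander (-(μ+1/2) - m) (-(μ+1/2) - m) m, Finset.sum_mul]
    apply Finset.sum_congr rfl
    intro j hj
    have hj' : j ≤ m := by have := Finset.mem_range.mp hj; omega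
    have hsgn : (-1:ℝ)^(2*j+1) = -1 := by rw [pow_succ, pow_mul]; norm_num
    rw [hsgn, odd_term μ hμ m j hj']
    ring
  rw [heven, hodd]
  have hstep := asc_succ ((-(μ+1/2) - m) + (-(μ+1/2) - m)) m
  rw [hstep]
  have hrefl := asc_reflect ((-(μ+1/2) - (m:ℝ)) + (-(μ+1/2) - m)) m
  rw [show (1:ℝ) - ((-(μ+1/2) - (m:ℝ)) + (-(μ+1/2) - m)) - m = 2*μ+m+2 by push_cast; ring]
    at hrefl
  rw [hrefl]
  have hs : ((-1:ℝ))^m * (-1)^m = 1 := by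
    rw [← pow_add, ← two_mul, pow_mul]; norm_num
  linear_combination ((-(asc (2*μ+(m:ℝ)+2) m) * ((-(μ+1/2) - (m:ℝ)) + (-(μ+1/2) - (m:ℝ)) + (m:ℝ))
    - (asc (2*μ+(m:ℝ)+2) m) * ((m:ℝ)+1)) / asc (μ+1/2) (m+1)) * hs

lemma final_id (μ : ℝ) (hμ : -(1/2 : ℝ) < μ) (m : ℕ) :
    2*μ * asc (2*μ+m+2) m / asc (μ+1/2) (m+1)
      = 2^(2*(m+1)) * μ / (((m+1 : ℕ) : ℝ) + μ)
        * ∏ k ∈ Finset.range (m+1), (((k : ℝ) + 1) + μ) / (((k : ℝ) + 1) + 2*μ) := by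
  have ha : (0:ℝ) < μ + 1/2 := by linarith
  have hApos : (0:ℝ) < asc (μ+1/2) (m+1) := asc_pos ha _
  have hQpos : (0:ℝ) < asc (2*μ+1) (m+1) := asc_pos (by linarith) _
  have hmpos : (0:ℝ) < ((m+1 : ℕ) : ℝ) + μ := by push_cast; linarith
  have hP : ∏ k ∈ Finset.range (m+1), (((k : ℝ) + 1) + μ) = asc (μ+1) (m+1) := by
    rw [asc]; apply Finset.prod_congr rfl; intro k _; ring
  have hQ : ∏ k ∈ Finset.range (m+1), (((k : ℝ) + 1) + 2*μ) = asc (2*μ+1) (m+1) := by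
    rw [asc]; apply Finset.prod_congr rfl; intro k _; ring
  rw [Finset.prod_div_distrib, hP, hQ]
  have hdup := dup μ (m+1)
  have hsplit := asc_add (2*μ+1) (m+1) (m+1)
  rw [show (m+1) + (m+1) = 2*(m+1) by ring] at hsplit
  rw [show (2*μ+1+((m+1 : ℕ) : ℝ)) = 2*μ+↑m+2 by push_cast; ring] at hsplit
  rw [asc_succ (2*μ+(m:ℝ)+2) m] at hsplit
  have hkey : (4:ℝ)^(m+1) * asc (μ+1) (m+1) * asc (μ+1/2) (m+1)
      = asc (2*μ+1) (m+1) * (asc (2*μ+↑m+2) m * (2*μ+↑m+2+↑m)) := by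
    rw [← hdup, hsplit]
  have h2 : (2:ℝ)^(2*(m+1)) = 4^(m+1) := by rw [pow_mul]; norm_num
  rw [h2]
  rw [div_mul_div_comm, div_eq_div_iff (by positivity) (by positivity)]
  push_cast
  linear_combination (-μ) * hkey

theorem pMu_alt_sum_eval (μ : ℝ) (hμ : -(1/2 : ℝ) < μ) (n : ℕ) (hn : 1 ≤ n) :
    pMu μ (2 * n) 1 (-1) =
      ((2 ^ (2 * n) * μ / (n + μ) *
        ∏ k ∈ Finset.range n, (((k : ℝ) + 1) + μ) / (((k : ℝ) + 1) + 2 * μ) : ℝ) : ℂ) := by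
  obtain ⟨m, rfl⟩ : ∃ m, n = m + 1 := ⟨n - 1, by omega⟩
  have hlift : pMu μ (2 * (m+1)) 1 (-1)
      = ((∑ k ∈ range (2*(m+1)+1), (-1:ℝ)^k * binomMu μ (2*(m+1)) (k : ℤ) : ℝ) : ℂ) := by
    rw [pMu]
    push_cast
    apply Finset.sum_congr rfl
    intro k hk
    have hk' : k ≤ 2*(m+1) := by have := Finset.mem_range.mp hk; omega
    have hne : ((-1 : ℂ))^k ≠ 0 := pow_ne_zero _ (by norm_num)
    have hmul : ((-1:ℂ))^(2*(m+1)-k) * (-1)^k = (-1)^k * (-1)^k := by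
      rw [← pow_add, ← pow_add, show 2*(m+1) - k + k = 2*(m+1) by omega,
        show k + k = 2*k by ring, pow_mul, pow_mul]
      norm_num
    have hpow : ((-1 : ℂ))^(2*(m+1) - k) = (-1)^k := mul_right_cancel₀ hne hmul
    rw [hpow, one_pow, mul_one]
    ring
  rw [hlift, real_main μ hμ m, final_id μ hμ m]
end
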